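/- lim_{ρ→0⁺} ρ² · Σ_{n=0}^{∞} Φ(-ρ√n) = 1/2, where Φ is the standard normal distribution function. -/

import Mathlib

open Real MeasureTheory Filter

/-- The standard normal distribution function. -/
noncomputable def stdNormalCDF (y : ℝ) : ℝ :=
  (Real.sqrt (2 * Real.pi))⁻¹ * ∫ t in Set.Iic y, Real.exp (-t ^ 2 / 2)

namespace RhoAux

open Set ENNReal

noncomputable def g (t : ℝ) : ℝ := Real.exp (-t ^ 2 / 2)

lemma g_apply (t : ℝ) : g t = Real.exp (-(1/2) * t ^ 2) := by unfold g; ring_nf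

lemma g_meas : Measurable g := by unfold g; fun_prop

lemma g_nonneg (t : ℝ) : 0 ≤ g t := (Real.exp_pos _).le

lemma g_int : Integrable g :=
  (integrable_exp_neg_mul_sq (by norm_num : (0:ℝ) < 1/2)).congr
    (Eventually.of_forall fun t => (g_apply t).symm)

lemma sqg_int : Integrable (fun t : ℝ => t ^ 2 * g t) := by
  refine (integrable_rpow_mul_exp_neg_mul_sq (by norm_num : (0:ℝ) < 1/2)
    (by norm_num : (-1:ℝ) < 2)).congr (Eventually.of_forall fun t => ?_)
  show t ^ (2:ℝ) * Real.exp (-(1/2) * t ^ 2) = t ^ 2 * g t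
  rw [g_apply, show ((2:ℝ)) = ((2:ℕ):ℝ) by norm_num, Real.rpow_natCast]

lemma int_g : ∫ t, g t = Real.sqrt (2 * π) := by
  have : g = fun t : ℝ => Real.exp (-(1/2) * t ^ 2) := funext g_apply
  rw [this, integral_gaussian]
  congr 1
  ring

lemma int_g_Iic : ∫ t in Iic (0:ℝ), g t = Real.sqrt (2 * π) / 2 := by
  have hsymm : ∫ t in Iic (0:ℝ), g t = ∫ t in Ioi (0:ℝ), g t := by
    have h0 : ∫ t in Iic (0:ℝ), g t = ∫ t in Iic (0:ℝ), g (-t) := by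
      congr 1
      funext t
      unfold g
      rw [neg_sq]
    rw [h0, integral_comp_neg_Iic, neg_zero]
  have hsplit : (∫ t in Iic (0:ℝ), g t) + ∫ t in Ioi (0:ℝ), g t = ∫ t, g t :=
    intervalIntegral.integral_Iic_add_Ioi g_int.integrableOn g_int.integrableOn
  rw [int_g, ← hsymm] at hsplit
  linarith

lemma int_sqg_Iic : ∫ t in Iic (0:ℝ), t ^ 2 * g t = Real.sqrt (2 * π) / 2 := by
  have hint : IntegrableOn (fun t : ℝ => (t ^ 2 - 1) * g t) (Iic 0) := by
    refine ((sqg_int.sub g_int).congr (Eventually.of_forall fun t => by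
      simp only [Pi.sub_apply]; ring)).integrableOn
  have hderiv : ∀ x ∈ Iic (0:ℝ), HasDerivAt (fun t : ℝ => -t * g t) ((x ^ 2 - 1) * g x) x := by
    intro x _
    have h1 : HasDerivAt (fun t : ℝ => -t ^ 2 / 2) (-x) x := by
      have : HasDerivAt (fun t : ℝ => -t ^ 2 / 2) (-((2:ℕ) * x ^ (2 - 1)) / 2) x := ((hasDerivAt_pow 2 x).neg).div_const 2
      convert this using 1
      push_cast
      ring
    have h2 : HasDerivAt g (-x * g x) x := by
      have := (Real.hasDerivAt_exp (-x ^ 2 / 2)).comp x h1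
      unfold g
      simpa [mul_comm, Function.comp_def] using this
    have : HasDerivAt (fun t : ℝ => -t * g t) (-1 * g x + -x * (-x * g x)) x := ((hasDerivAt_id x).neg).mul h2
    convert this using 1
    unfold g
    ring
  have htend : Tendsto (fun t : ℝ => -t * g t) atBot (nhds 0) := by
    have h1 : Tendsto (fun x : ℝ => x * Real.exp (-(1/2) * x ^ 2)) atTop (nhds 0) := by
      have h0 : Tendsto (fun x : ℝ => x * Real.exp (-(1/2) * x)) atTop (nhds 0) := by
        simpa [Real.rpow_one] using
          tendsto_rpow_mul_exp_neg_mul_atTop_nhds_zero 1 (1/2) (by norm_num)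
      refine squeeze_zero' ?_ ?_ h0
      · filter_upwards [eventually_ge_atTop (1:ℝ)] with x hx
        positivity
      · filter_upwards [eventually_ge_atTop (1:ℝ)] with x hx
        have : Real.exp (-(1/2) * x ^ 2) ≤ Real.exp (-(1/2) * x) :=
          Real.exp_le_exp.mpr (by nlinarith)
        exact mul_le_mul_of_nonneg_left this (by linarith)
    have h2 : Tendsto (fun t : ℝ => -t) atBot atTop := tendsto_neg_atBot_atTop
    have := h1.comp h2
    refine this.congr fun t => ?_
    simp [g_apply]
  have key := integral_Iic_of_hasDerivAt_of_tendsto' hderiv hint htend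
  simp only [neg_zero, zero_mul, sub_zero] at key
  -- key : ∫ x in Iic 0, (x ^ 2 - 1) * g x = 0 (since -0 * g 0 - 0 = 0)
  have hsub : ∫ t in Iic (0:ℝ), (t ^ 2 - 1) * g t
      = (∫ t in Iic (0:ℝ), t ^ 2 * g t) - ∫ t in Iic (0:ℝ), g t := by
    rw [← integral_sub sqg_int.integrableOn g_int.integrableOn]
    congr 1
    funext t
    ring
  rw [key] at hsub
  rw [int_g_Iic] at hsub
  linarith

variable {ρ : ℝ} (hρ : 0 < ρ)

lemma mem_iff (hρ : 0 < ρ) (t : ℝ) (n : ℕ) :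
    t ≤ -(ρ * Real.sqrt n) ↔ t ≤ 0 ∧ (n : ℝ) ≤ t ^ 2 / ρ ^ 2 := by
  constructor
  · intro ht
    have ht0 : t ≤ 0 := ht.trans (neg_nonpos.mpr (mul_nonneg hρ.le (Real.sqrt_nonneg _)))
    refine ⟨ht0, ?_⟩
    have h1 : ρ * Real.sqrt n ≤ -t := by linarith
    have h2 : Real.sqrt n ≤ -t / ρ := (le_div_iff₀ hρ).mpr (by linarith [h1, mul_comm ρ (Real.sqrt n)])
    have h3 := pow_le_pow_left₀ (Real.sqrt_nonneg _) h2 2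
    rw [Real.sq_sqrt (Nat.cast_nonneg n)] at h3
    calc (n:ℝ) ≤ (-t / ρ) ^ 2 := h3
    _ = t ^ 2 / ρ ^ 2 := by rw [div_pow, neg_sq]
  · rintro ⟨ht0, hn⟩
    have h1 : Real.sqrt n ≤ Real.sqrt (t ^ 2 / ρ ^ 2) := Real.sqrt_le_sqrt hn
    have h2 : Real.sqrt (t ^ 2 / ρ ^ 2) = -t / ρ := by
      rw [show t ^ 2 / ρ ^ 2 = (-t / ρ) ^ 2 by rw [div_pow, neg_sq]]
      exact Real.sqrt_sq (div_nonneg (by linarith) hρ.le)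
    rw [h2] at h1
    have := (le_div_iff₀ hρ).mp h1
    linarith [this, mul_comm (Real.sqrt n) ρ]

/-- the count of indices, for `t ≤ 0`. -/
lemma count_eq (hρ : 0 < ρ) {t : ℝ} (ht : t ≤ 0) (f : ℝ → ℝ≥0∞) :
    ∑' n : ℕ, (Iic (-(ρ * Real.sqrt n))).indicator f t
      = (⌊t ^ 2 / ρ ^ 2⌋₊ + 1) * f t := by
  have hnn : 0 ≤ t ^ 2 / ρ ^ 2 := div_nonneg (sq_nonneg _) (sq_nonneg _)
  set N := ⌊t ^ 2 / ρ ^ 2⌋₊ with hN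
  have hcond : ∀ n : ℕ, t ∈ Iic (-(ρ * Real.sqrt n)) ↔ n ≤ N := by
    intro n
    rw [mem_Iic, mem_iff hρ, hN, Nat.le_floor_iff hnn]
    exact ⟨fun h => h.2, fun h => ⟨ht, h⟩⟩
  have heq : ∀ n : ℕ, (Iic (-(ρ * Real.sqrt n))).indicator f t
      = if n ≤ N then f t else 0 := by
    intro n
    by_cases h : n ≤ N
    · rw [if_pos h, indicator_of_mem ((hcond n).mpr h)]
    · rw [if_neg h, indicator_of_notMem (fun hm => h ((hcond n).mp hm))]
  simp_rw [heq]
  rw [tsum_eq_sum (s := Finset.range (N + 1))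
    (fun n hn => if_neg (fun h => hn (Finset.mem_range.mpr (Nat.lt_succ_of_le h))))]
  rw [Finset.sum_congr rfl (fun n hn => if_pos (Nat.lt_succ_iff.mp (Finset.mem_range.mp hn)))]
  rw [Finset.sum_const, Finset.card_range, nsmul_eq_mul]
  push_cast
  ring

noncomputable def ν (ρ : ℝ) (n : ℕ) : ℝ≥0∞ :=
  ∫⁻ t in Iic (-(ρ * Real.sqrt n)), ENNReal.ofReal (g t)

lemma tsum_nu_eq (hρ : 0 < ρ) :
    ∑' n : ℕ, ν ρ n
      = ∫⁻ t, ∑' n : ℕ, (Iic (-(ρ * Real.sqrt n))).indicator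
          (fun s => ENNReal.ofReal (g s)) t := by
  have h1 : ∀ n : ℕ, ν ρ n = ∫⁻ t, (Iic (-(ρ * Real.sqrt n))).indicator
      (fun s => ENNReal.ofReal (g s)) t := by
    intro n
    unfold ν
    rw [lintegral_indicator measurableSet_Iic]
  simp_rw [h1]
  exact (lintegral_tsum (fun n =>
    ((g_meas.ennreal_ofReal).indicator measurableSet_Iic).aemeasurable)).symm

lemma F_upper (hρ : 0 < ρ) (t : ℝ) :
    ∑' n : ℕ, (Iic (-(ρ * Real.sqrt n))).indicator (fun s => ENNReal.ofReal (g s)) t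
      ≤ (Iic (0:ℝ)).indicator (fun s => ENNReal.ofReal ((s ^ 2 / ρ ^ 2 + 1) * g s)) t := by
  by_cases ht : t ≤ 0
  · rw [count_eq hρ ht, indicator_of_mem (mem_Iic.mpr ht)]
    rw [ENNReal.ofReal_mul (by positivity)]
    refine mul_le_mul_left ?_ _
    have h1 : ((⌊t ^ 2 / ρ ^ 2⌋₊ : ℝ≥0∞) + 1) = ENNReal.ofReal ((⌊t ^ 2 / ρ ^ 2⌋₊ : ℝ) + 1) := by
      rw [ENNReal.ofReal_add (Nat.cast_nonneg _) zero_le_one, ENNReal.ofReal_natCast,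
        ENNReal.ofReal_one]
    rw [h1]
    refine ENNReal.ofReal_le_ofReal ?_
    have := Nat.floor_le (div_nonneg (sq_nonneg t) (sq_nonneg ρ))
    linarith
  · push_neg at ht
    have : ∀ n : ℕ, (Iic (-(ρ * Real.sqrt n))).indicator (fun s => ENNReal.ofReal (g s)) t = 0 := by
      intro n
      refine indicator_of_notMem ?_ _
      rw [mem_Iic, mem_iff hρ]
      rintro ⟨h, -⟩
      linarith
    simp_rw [this]
    simp

lemma F_lower (hρ : 0 < ρ) (t : ℝ) :
    (Iic (0:ℝ)).indicator (fun s => ENNReal.ofReal (s ^ 2 / ρ ^ 2 * g s)) t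
      ≤ ∑' n : ℕ, (Iic (-(ρ * Real.sqrt n))).indicator (fun s => ENNReal.ofReal (g s)) t := by
  by_cases ht : t ≤ 0
  · rw [count_eq hρ ht, indicator_of_mem (mem_Iic.mpr ht)]
    rw [ENNReal.ofReal_mul (by positivity)]
    refine mul_le_mul_left ?_ _
    have h1 : ((⌊t ^ 2 / ρ ^ 2⌋₊ : ℝ≥0∞) + 1) = ENNReal.ofReal ((⌊t ^ 2 / ρ ^ 2⌋₊ : ℝ) + 1) := by
      rw [ENNReal.ofReal_add (Nat.cast_nonneg _) zero_le_one, ENNReal.ofReal_natCast,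
        ENNReal.ofReal_one]
    rw [h1]
    refine ENNReal.ofReal_le_ofReal ?_
    exact (Nat.lt_floor_add_one (t ^ 2 / ρ ^ 2)).le
  · rw [indicator_of_notMem (fun hm => ht (mem_Iic.mp hm))]
    exact zero_le

lemma intOn_upper (hρ : 0 < ρ) :
    IntegrableOn (fun t : ℝ => (t ^ 2 / ρ ^ 2 + 1) * g t) (Iic 0) := by
  refine (((sqg_int.const_mul (ρ ^ 2)⁻¹).add g_int).congr
    (Eventually.of_forall fun t => by simp only [Pi.add_apply]; ring)).integrableOn

lemma intOn_lower (hρ : 0 < ρ) :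
    IntegrableOn (fun t : ℝ => t ^ 2 / ρ ^ 2 * g t) (Iic 0) := by
  refine ((sqg_int.const_mul (ρ ^ 2)⁻¹).congr
    (Eventually.of_forall fun t => by ring)).integrableOn

lemma tsum_nu_le (hρ : 0 < ρ) :
    ∑' n : ℕ, ν ρ n ≤ ENNReal.ofReal (∫ t in Iic (0:ℝ), (t ^ 2 / ρ ^ 2 + 1) * g t) := by
  rw [tsum_nu_eq hρ]
  rw [ofReal_integral_eq_lintegral_ofReal (intOn_upper hρ)
    (Eventually.of_forall fun t => mul_nonneg (by positivity) (g_nonneg t))]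
  rw [← lintegral_indicator measurableSet_Iic]
  exact lintegral_mono (F_upper hρ)

lemma le_tsum_nu (hρ : 0 < ρ) :
    ENNReal.ofReal (∫ t in Iic (0:ℝ), t ^ 2 / ρ ^ 2 * g t) ≤ ∑' n : ℕ, ν ρ n := by
  rw [tsum_nu_eq hρ]
  rw [ofReal_integral_eq_lintegral_ofReal (intOn_lower hρ)
    (Eventually.of_forall fun t => mul_nonneg (by positivity) (g_nonneg t))]
  rw [← lintegral_indicator measurableSet_Iic]
  exact lintegral_mono (F_lower hρ)

lemma tsum_nu_ne_top (hρ : 0 < ρ) : ∑' n : ℕ, ν ρ n ≠ ∞ :=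
  ne_top_of_le_ne_top ENNReal.ofReal_ne_top (tsum_nu_le hρ)

lemma S_eq (hρ : 0 < ρ) :
    ∑' n : ℕ, stdNormalCDF (-(ρ * Real.sqrt n))
      = (Real.sqrt (2 * π))⁻¹ * (∑' n : ℕ, ν ρ n).toReal := by
  have hterm : ∀ n : ℕ, stdNormalCDF (-(ρ * Real.sqrt n))
      = (Real.sqrt (2 * π))⁻¹ * (ν ρ n).toReal := by
    intro n
    unfold stdNormalCDF ν
    congr 1
    exact integral_eq_lintegral_of_nonneg_ae (Eventually.of_forall fun t => g_nonneg t)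
      g_meas.aestronglyMeasurable.restrict
  simp_rw [hterm]
  rw [tsum_mul_left]
  congr 1
  rw [ENNReal.tsum_toReal_eq]
  intro n
  exact ne_top_of_le_ne_top (tsum_nu_ne_top hρ) (ENNReal.le_tsum n)

lemma bounds (hρ : 0 < ρ) :
    1/2 ≤ ρ ^ 2 * ∑' n : ℕ, stdNormalCDF (-(ρ * Real.sqrt n)) ∧
    ρ ^ 2 * ∑' n : ℕ, stdNormalCDF (-(ρ * Real.sqrt n)) ≤ 1/2 + ρ ^ 2 / 2 := by
  have hsqrt_pos : 0 < Real.sqrt (2 * π) := Real.sqrt_pos.mpr (by positivity)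
  have hLo : ∫ t in Iic (0:ℝ), t ^ 2 / ρ ^ 2 * g t = (ρ ^ 2)⁻¹ * (Real.sqrt (2 * π) / 2) := by
    rw [show (fun t : ℝ => t ^ 2 / ρ ^ 2 * g t) = fun t : ℝ => (ρ ^ 2)⁻¹ * (t ^ 2 * g t) by
      funext t; ring]
    rw [integral_const_mul, int_sqg_Iic]
  have hU : ∫ t in Iic (0:ℝ), (t ^ 2 / ρ ^ 2 + 1) * g t
      = (ρ ^ 2)⁻¹ * (Real.sqrt (2 * π) / 2) + Real.sqrt (2 * π) / 2 := by
    rw [show (fun t : ℝ => (t ^ 2 / ρ ^ 2 + 1) * g t)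
        = fun t : ℝ => t ^ 2 / ρ ^ 2 * g t + g t by funext t; ring]
    rw [integral_add (intOn_lower hρ) g_int.integrableOn, hLo, int_g_Iic]
  have hLo_nonneg : 0 ≤ ∫ t in Iic (0:ℝ), t ^ 2 / ρ ^ 2 * g t := by
    rw [hLo]; positivity
  have htoReal_le : (∑' n : ℕ, ν ρ n).toReal
      ≤ (ρ ^ 2)⁻¹ * (Real.sqrt (2 * π) / 2) + Real.sqrt (2 * π) / 2 := by
    rw [← hU]
    have := ENNReal.toReal_mono ENNReal.ofReal_ne_top (tsum_nu_le hρ)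
    rwa [ENNReal.toReal_ofReal (by rw [hU]; positivity)] at this
  have hle_toReal : (ρ ^ 2)⁻¹ * (Real.sqrt (2 * π) / 2) ≤ (∑' n : ℕ, ν ρ n).toReal := by
    rw [← hLo]
    have := ENNReal.toReal_mono (tsum_nu_ne_top hρ) (le_tsum_nu hρ)
    rwa [ENNReal.toReal_ofReal hLo_nonneg] at this
  rw [S_eq hρ]
  have hρ2 : (0:ℝ) < ρ ^ 2 := by positivity
  constructor
  · have h := mul_le_mul_of_nonneg_left hle_toReal (by positivity :
      (0:ℝ) ≤ ρ ^ 2 * (Real.sqrt (2 * π))⁻¹)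
    calc (1:ℝ)/2 = ρ ^ 2 * (Real.sqrt (2 * π))⁻¹ * ((ρ ^ 2)⁻¹ * (Real.sqrt (2 * π) / 2)) := by
          field_simp
    _ ≤ ρ ^ 2 * (Real.sqrt (2 * π))⁻¹ * (∑' n : ℕ, ν ρ n).toReal := h
    _ = ρ ^ 2 * ((Real.sqrt (2 * π))⁻¹ * (∑' n : ℕ, ν ρ n).toReal) := by ring
  · have h := mul_le_mul_of_nonneg_left htoReal_le (by positivity :
      (0:ℝ) ≤ ρ ^ 2 * (Real.sqrt (2 * π))⁻¹)
    calc ρ ^ 2 * ((Real.sqrt (2 * π))⁻¹ * (∑' n : ℕ, ν ρ n).toReal)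
        = ρ ^ 2 * (Real.sqrt (2 * π))⁻¹ * (∑' n : ℕ, ν ρ n).toReal := by ring
    _ ≤ ρ ^ 2 * (Real.sqrt (2 * π))⁻¹
          * ((ρ ^ 2)⁻¹ * (Real.sqrt (2 * π) / 2) + Real.sqrt (2 * π) / 2) := h
    _ = 1/2 + ρ ^ 2 / 2 := by
          field_simp

end RhoAux

theorem tendsto_rho_sq_tsum_stdNormalCDF :
    Tendsto (fun ρ : ℝ => ρ ^ 2 * ∑' n : ℕ, stdNormalCDF (-(ρ * Real.sqrt n)))
      (nhdsWithin 0 (Set.Ioi 0)) (nhds (1 / 2)) := by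
  have hup : Tendsto (fun ρ : ℝ => 1/2 + ρ ^ 2 / 2) (nhdsWithin 0 (Set.Ioi 0)) (nhds (1/2)) := by
    have : Tendsto (fun ρ : ℝ => 1/2 + ρ ^ 2 / 2) (nhds 0) (nhds (1/2 + 0 ^ 2 / 2)) := by
      exact (continuous_const.add ((continuous_pow 2).div_const 2)).tendsto 0
    simpa using this.mono_left nhdsWithin_le_nhds
  refine tendsto_of_tendsto_of_tendsto_of_le_of_le' tendsto_const_nhds hup ?_ ?_
  · filter_upwards [self_mem_nhdsWithin] with ρ hρ
    exact (RhoAux.bounds hρ).1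
  · filter_upwards [self_mem_nhdsWithin] with ρ hρ
    exact (RhoAux.bounds hρ).2
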